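/- (Sphere-packing type bound for b-symbol distance) Let 1 ≤ d ≤ n and t = ⌊(d-1)/2⌋. Then A_b(n,d,q) ≤ q^{bn} / (Σ_{i=0}^{t} C(n,i)(q^b-1)^i). -/

import Mathlib

open Finset

/-- Cyclic coordinate access: `cget z k` is the coordinate `z_k`, indices taken mod `n`. -/
def cget {Fq : Type*} [Zero Fq] {n : ℕ} (y : Fin n → Fq) (k : ℕ) : Fq :=
  if h : n = 0 then 0 else y ⟨k % n, Nat.mod_lt k (Nat.pos_of_ne_zero h)⟩

/-- The `b`-symbol weight of a vector `y ∈ Fq^n`. -/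
def wtb {Fq : Type*} [Zero Fq] [DecidableEq Fq] {n : ℕ} (b : ℕ) (y : Fin n → Fq) : ℕ :=
  ((Finset.range n).filter fun i => ∃ j : Fin b, cget y (i + j) ≠ 0).card

/-- The `b`-symbol distance on `Fq^n`. -/
def db {Fq : Type*} [Field Fq] [DecidableEq Fq] {n : ℕ} (b : ℕ) (x y : Fin n → Fq) : ℕ :=
  wtb b (x - y)


/-- `Asize Fq n b d` : the largest size of a code in `Fq^n` with minimum `b`-symbol
distance at least `d`. -/
noncomputable def Asize (Fq : Type*) [Field Fq] [Fintype Fq] [DecidableEq Fq] (n b d : ℕ) : ℕ :=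
  sSup {M | ∃ C : Finset (Fin n → Fq),
    (∀ x ∈ C, ∀ y ∈ C, x ≠ y → d ≤ db b x y) ∧ C.card = M}

section HammingCount

variable {A : Type*} [Fintype A] [DecidableEq A] {n : ℕ}

lemma fiber_card (x : Fin n → A) (s : Finset (Fin n)) :
    ((univ : Finset (Fin n → A)).filter
        fun y => (univ.filter fun j => y j ≠ x j) = s).card
    = (Fintype.card A - 1) ^ s.card := by
  have h : ((univ : Finset (Fin n → A)).filter
        fun y => (univ.filter fun j => y j ≠ x j) = s).card
      = (s.pi fun j => univ.erase (x j)).card := by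
    refine card_bij' (fun y _ => fun j _ => y j)
      (fun f _ => fun j => if h : j ∈ s then f j h else x j) ?_ ?_ ?_ ?_
    · intro y hy
      rw [mem_filter] at hy
      rw [mem_pi]
      intro j hj
      rw [mem_erase]
      refine ⟨?_, mem_univ _⟩
      have := hy.2 ▸ hj
      exact (mem_filter.mp this).2
    · intro f hf
      rw [mem_pi] at hf
      rw [mem_filter]
      refine ⟨mem_univ _, ?_⟩
      ext j
      simp only [mem_filter, mem_univ, true_and]
      constructor
      · intro h
        by_contra hj
        simp [hj] at h
      · intro hj
        simp only [hj, dif_pos]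
        exact (mem_erase.mp (hf j hj)).1
    · intro y hy
      rw [mem_filter] at hy
      funext j
      by_cases hj : j ∈ s
      · simp [hj]
      · simp only [hj, dif_neg, not_false_iff]
        have := hy.2 ▸ hj
        simp only [mem_filter, mem_univ, true_and, not_not] at this
        exact this.symm
    · intro f hf
      funext j hj
      simp [hj]
  rw [h, card_pi]
  rw [Finset.prod_congr rfl (fun j _ => ?_), Finset.prod_const]
  rw [card_erase_of_mem (mem_univ _), card_univ]

lemma dist_eq_card (x : Fin n → A) (i : ℕ) :
    ((univ : Finset (Fin n → A)).filter fun y => hammingDist x y = i).card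
      = n.choose i * (Fintype.card A - 1) ^ i := by
  have hdist : ∀ y : Fin n → A,
      hammingDist x y = (univ.filter fun j => y j ≠ x j).card := by
    intro y; rw [hammingDist_comm]; rfl
  rw [card_eq_sum_card_fiberwise
    (f := fun y => univ.filter fun j => y j ≠ x j)
    (t := Finset.powersetCard i univ)
    (by intro y hy
        rw [Finset.mem_coe, mem_filter] at hy
        rw [Finset.mem_coe, mem_powersetCard]
        beta_reduce
        exact ⟨subset_univ _, by rw [← hdist y]; exact hy.2⟩)]
  rw [Finset.sum_congr rfl (fun s hs => ?_), Finset.sum_const,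
    Finset.card_powersetCard, card_univ, Fintype.card_fin, smul_eq_mul]
  have hsc : s.card = i := (Finset.mem_powersetCard.mp hs).2
  rw [Finset.filter_filter]
  have : ((univ : Finset (Fin n → A)).filter
      fun y => hammingDist x y = i ∧ (univ.filter fun j => y j ≠ x j) = s)
      = (univ.filter fun y => (univ.filter fun j => y j ≠ x j) = s) := by
    apply Finset.filter_congr
    intro y _
    constructor
    · exact fun h => h.2
    · intro h; exact ⟨by rw [hdist y, h, hsc], h⟩
  rw [this, fiber_card, hsc]

lemma ball_card (x : Fin n → A) (t : ℕ) :
    ((univ : Finset (Fin n → A)).filter fun y => hammingDist x y ≤ t).card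
      = ∑ i ∈ range (t + 1), n.choose i * (Fintype.card A - 1) ^ i := by
  rw [card_eq_sum_card_fiberwise (f := fun y => hammingDist x y) (t := range (t + 1))
    (by intro y hy
        exact mem_range.mpr (Nat.lt_succ_of_le (mem_filter.mp hy).2))]
  refine Finset.sum_congr rfl fun i hi => ?_
  rw [Finset.filter_filter, ← dist_eq_card x i]
  congr 1
  apply Finset.filter_congr
  intro y _
  constructor
  · exact fun h => h.2
  · intro h
    exact ⟨h ▸ Nat.lt_succ_iff.mp (mem_range.mp hi), h⟩

lemma packing (C : Finset (Fin n → A)) (d : ℕ) (hd : 1 ≤ d)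
    (hC : ∀ x ∈ C, ∀ y ∈ C, x ≠ y → d ≤ hammingDist x y) :
    C.card * ∑ i ∈ range ((d - 1) / 2 + 1), n.choose i * (Fintype.card A - 1) ^ i
      ≤ Fintype.card A ^ n := by
  set t := (d - 1) / 2 with ht
  have hdisj : ∀ x1 ∈ C, ∀ x2 ∈ C, x1 ≠ x2 →
      Disjoint ((univ : Finset (Fin n → A)).filter fun y => hammingDist x1 y ≤ t)
        (univ.filter fun y => hammingDist x2 y ≤ t) := by
    intro x1 h1 x2 h2 hne
    rw [Finset.disjoint_left]
    intro z hz1 hz2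
    rw [mem_filter] at hz1 hz2
    have htri := hammingDist_triangle x1 z x2
    have hcomm : hammingDist z x2 = hammingDist x2 z := hammingDist_comm _ _
    have hle := hC x1 h1 x2 h2 hne
    have h2t : (d - 1) / 2 * 2 ≤ d - 1 := Nat.div_mul_le_self _ _
    omega
  have hcard : (C.biUnion fun x => (univ : Finset (Fin n → A)).filter
      fun y => hammingDist x y ≤ t).card
      = C.card * ∑ i ∈ range (t + 1), n.choose i * (Fintype.card A - 1) ^ i := by
    rw [Finset.card_biUnion hdisj]
    rw [Finset.sum_congr rfl (fun x _ => ball_card x t), Finset.sum_const, smul_eq_mul]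
  calc C.card * ∑ i ∈ range (t + 1), n.choose i * (Fintype.card A - 1) ^ i
      = _ := hcard.symm
    _ ≤ (univ : Finset (Fin n → A)).card := Finset.card_le_univ _
    _ = Fintype.card A ^ n := by rw [card_univ]; simp [Fintype.card_fun]

end HammingCount

section Emb
variable {Fq : Type*} [Field Fq] [DecidableEq Fq] {n : ℕ}

/-- The embedding `Fq^n → (Fq^b)^n` reading `b` consecutive (cyclic) symbols. -/
def phi (b : ℕ) (x : Fin n → Fq) : Fin n → (Fin b → Fq) :=
  fun i j => cget x (i.val + j.val)

omit [DecidableEq Fq] in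
lemma cget_sub (x y : Fin n → Fq) (k : ℕ) :
    cget (x - y) k = cget x k - cget y k := by
  unfold cget
  split
  · simp
  · simp [Pi.sub_apply]

lemma card_range_filter (p : ℕ → Prop) [DecidablePred p] :
    ((range n).filter p).card = ((univ : Finset (Fin n)).filter fun i => p i.val).card := by
  refine (card_nbij (fun i : Fin n => i.val) ?_ ?_ ?_).symm
  · intro i hi
    rw [Finset.mem_coe, mem_filter] at hi ⊢
    exact ⟨mem_range.mpr i.isLt, hi.2⟩
  · intro a _ b _ hab
    exact Fin.val_injective hab
  · intro k hk
    rw [Finset.coe_filter] at hk ⊢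
    obtain ⟨hk1, hk2⟩ := hk
    rw [mem_range] at hk1
    exact ⟨⟨k, hk1⟩, ⟨mem_univ _, hk2⟩, rfl⟩

lemma db_eq_hamming (b : ℕ) (x y : Fin n → Fq) :
    db b x y = hammingDist (phi b x) (phi b y) := by
  unfold db wtb hammingDist phi
  rw [card_range_filter]
  congr 1
  apply Finset.filter_congr
  intro i _
  simp only [Function.ne_iff]
  constructor
  · rintro ⟨j, hj⟩
    exact ⟨j, fun h => hj (by rw [cget_sub, h, sub_self])⟩
  · rintro ⟨j, hj⟩
    exact ⟨j, fun h => hj (by rw [← sub_eq_zero]; rw [cget_sub] at h; exact h)⟩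

end Emb

/-- Corollary 4.8 (sphere-packing type bound for the `b`-symbol distance): with
`t = ⌊(d-1)/2⌋`, `A_b(n,d,q) ≤ q^{bn} / Σ_{i=0}^{t} C(n,i)(q^b-1)^i`. -/
theorem sphere_packing_bound {Fq : Type*} [Field Fq] [Fintype Fq] [DecidableEq Fq]
    {n d b : ℕ} (hb1 : 1 ≤ b) (hbn : b ≤ n) (hd : 1 ≤ d) (hdn : d ≤ n) :
    (Asize Fq n b d : ℝ) ≤
      (Fintype.card Fq : ℝ) ^ (b * n) /
        ∑ i ∈ Finset.range ((d - 1) / 2 + 1),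
          (n.choose i : ℝ) * ((Fintype.card Fq : ℝ) ^ b - 1) ^ i := by
  set Q := Fintype.card Fq with hQ
  have hQ1 : 1 ≤ Q := Fintype.card_pos
  have hQb1 : 1 ≤ Q ^ b := Nat.one_le_pow _ _ hQ1
  have hcardA : Fintype.card (Fin b → Fq) = Q ^ b := by
    simp [Fintype.card_fun, hQ]
  set t := (d - 1) / 2 with ht
  set S : ℕ := ∑ i ∈ range (t + 1), n.choose i * (Q ^ b - 1) ^ i with hS
  -- key counting bound for any code
  have key : ∀ M ∈ {M | ∃ C : Finset (Fin n → Fq),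
      (∀ x ∈ C, ∀ y ∈ C, x ≠ y → d ≤ db b x y) ∧ C.card = M},
      M * S ≤ Q ^ (b * n) := by
    rintro M ⟨C, hC, rfl⟩
    set C' : Finset (Fin n → (Fin b → Fq)) := C.image (phi b) with hC'
    have hinj : Set.InjOn (phi b) (C : Set (Fin n → Fq)) := by
      intro x hx y hy hxy
      by_contra hne
      have h1 := hC x hx y hy hne
      rw [db_eq_hamming] at h1
      rw [hxy, hammingDist_self] at h1
      omega
    have hcC : C'.card = C.card := Finset.card_image_of_injOn hinj
    have hC'd : ∀ u ∈ C', ∀ v ∈ C', u ≠ v → d ≤ hammingDist u v := by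
      intro u hu v hv huv
      rw [hC', Finset.mem_image] at hu hv
      obtain ⟨x, hx, rfl⟩ := hu
      obtain ⟨y, hy, rfl⟩ := hv
      have hxy : x ≠ y := fun h => huv (by rw [h])
      rw [← db_eq_hamming]
      exact hC x hx y hy hxy
    have := packing C' d hd hC'd
    rw [hcC, hcardA, ← pow_mul] at this
    simpa [hS, ht] using this
  -- Asize is in the set
  have hne : (0 : ℕ) ∈ {M | ∃ C : Finset (Fin n → Fq),
      (∀ x ∈ C, ∀ y ∈ C, x ≠ y → d ≤ db b x y) ∧ C.card = M} :=
    ⟨∅, by simp, Finset.card_empty⟩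
  have hbdd : BddAbove {M | ∃ C : Finset (Fin n → Fq),
      (∀ x ∈ C, ∀ y ∈ C, x ≠ y → d ≤ db b x y) ∧ C.card = M} := by
    refine ⟨Fintype.card (Fin n → Fq), ?_⟩
    rintro M ⟨C, _, rfl⟩
    exact (Finset.card_le_univ C).trans (le_of_eq (card_univ))
  have hmem := Nat.sSup_mem ⟨0, hne⟩ hbdd
  have hkey : Asize Fq n b d * S ≤ Q ^ (b * n) := key _ hmem
  -- positivity of the denominator (as a natural number)
  have hSpos : 0 < S := by
    have h0 : (1 : ℕ) ≤ S := by
      have := Finset.single_le_sum (f := fun i => n.choose i * (Q ^ b - 1) ^ i)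
        (fun i _ => Nat.zero_le _) (Finset.mem_range.mpr (Nat.succ_pos t))
      simpa using this
    omega
  -- identify the real sum with the cast of S
  have hsum : ((S : ℕ) : ℝ)
      = ∑ i ∈ Finset.range (t + 1),
          (n.choose i : ℝ) * ((Q : ℝ) ^ b - 1) ^ i := by
    rw [hS, Nat.cast_sum]
    refine Finset.sum_congr rfl fun i _ => ?_
    rw [Nat.cast_mul, Nat.cast_pow, Nat.cast_sub hQb1]
    push_cast
    ring
  have hsumpos : (0 : ℝ) < ∑ i ∈ Finset.range (t + 1),
      (n.choose i : ℝ) * ((Q : ℝ) ^ b - 1) ^ i := by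
    rw [← hsum]
    exact_mod_cast hSpos
  rw [le_div_iff₀ hsumpos, ← hsum]
  exact_mod_cast hkey
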